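/- Let M be a finite matroid on ground set N and let B₁ and B₂ be two bases of M. Then there exists a bijection π : B₁ → B₂ such that for every element e ∈ B₁, the set (B₁ ∖ {e}) ∪ {π(e)} is independent in M. -/

import Mathlib

open Set

/-- If `f` lies in the closure of `B \ {e}` for every `e ∈ S`, and in the closure of `B`,
then `f` lies in the closure of `B \ S`. -/
lemma aux_closure_diff {N : Type*} {M : Matroid N} {B : Set N} {f : N}
    (hB : M.Indep B) {S : Set N} (hSfin : S.Finite) (hSB : S ⊆ B)
    (hf : f ∈ M.closure B)
    (h : ∀ e ∈ S, f ∈ M.closure (B \ {e})) : f ∈ M.closure (B \ S) := by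
  refine Set.Finite.induction_on
    (motive := fun S _ => S ⊆ B → (∀ e ∈ S, f ∈ M.closure (B \ {e})) → f ∈ M.closure (B \ S))
    S hSfin (fun _ _ => by simpa using hf) ?_ hSB h
  intro a S haS hSfin' IH hSB' h'
  · have haB : a ∈ B := hSB' (mem_insert _ _)
    have hIH : f ∈ M.closure (B \ S) :=
      IH ((subset_insert a S).trans hSB') (fun e he => h' e (mem_insert_of_mem _ he))
    set X := B \ insert a S with hX
    have hsub : B \ S ⊆ insert a X := by
      intro x hx
      rcases eq_or_ne x a with rfl | hxa
      · exact mem_insert _ _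
      · exact mem_insert_of_mem _ ⟨hx.1, by simp [hxa, hx.2]⟩
    have hfins : f ∈ M.closure (insert a X) :=
      M.closure_subset_closure hsub hIH
    by_cases hfX : f ∈ M.closure X
    · exact hfX
    · exfalso
      have hex := Matroid.closure_exchange (M := M) ⟨hfins, hfX⟩
      have hfa : f ∈ M.closure (B \ {a}) := h' a (mem_insert _ _)
      have hXa : X ⊆ B \ {a} := diff_subset_diff_right (by simp)
      have h1 : a ∈ M.closure (insert f (B \ {a})) :=
        M.closure_subset_closure (insert_subset_insert hXa) hex.1
      rw [Matroid.closure_insert_eq_of_mem_closure hfa] at h1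
      exact (Matroid.indep_iff_forall_notMem_closure_diff hB.subset_ground).mp hB haB h1

/-- An independent set contained in the closure of an independent set `I`
has cardinality at most that of `I`. -/
lemma aux_encard_le {N : Type*} {M : Matroid N} {I J : Set N}
    (hI : M.Indep I) (hJ : M.Indep J) (hJI : J ⊆ M.closure I) : J.encard ≤ I.encard := by
  by_contra hlt
  push_neg at hlt
  obtain ⟨e, heJI, hins⟩ := hI.augment hJ hlt
  have := (hI.insert_indep_iff_of_notMem heJI.2).mp hins
  exact this.2 (hJI heJI.1)

/-- for any two bases `B₁`, `B₂` of a finite matroid `M`, there is a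
bijection `π : B₁ → B₂` such that for every `e ∈ B₁` the set `(B₁ ∖ {e}) ∪ {π(e)}`
is independent in `M`. -/
theorem stmt15 {N : Type*} (M : Matroid N) [M.Finite]
    (B₁ B₂ : Set N) (hB₁ : M.IsBase B₁) (hB₂ : M.IsBase B₂) :
    ∃ π : B₁ → B₂, Function.Bijective π ∧
      ∀ e : B₁, M.Indep ((B₁ \ {(e : N)}) ∪ {(π e : N)}) := by
  classical
  have hB1fin : B₁.Finite := M.set_finite B₁ hB₁.subset_ground
  have hB2fin : B₂.Finite := M.set_finite B₂ hB₂.subset_ground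
  -- the "neighbourhood" finsets for Hall's theorem
  have hrfin : ∀ f : N, {e | e ∈ B₁ \ B₂ ∧ M.Indep (insert f (B₁ \ {e}))}.Finite :=
    fun f => (hB1fin.diff (t := B₂)).subset (fun e he => he.1)
  set r : ↥(B₂ \ B₁) → Finset N := fun f => (hrfin ↑f).toFinset with hr
  have hrmem : ∀ (f : ↥(B₂ \ B₁)) (e : N),
      e ∈ r f ↔ e ∈ B₁ \ B₂ ∧ M.Indep (insert (↑f : N) (B₁ \ {e})) := by
    intro f e; simp [hr, Set.Finite.mem_toFinset]
  -- Hall's condition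
  have hall : ∀ s : Finset ↥(B₂ \ B₁), s.card ≤ (s.biUnion r).card := by
    intro s
    set A : Set N := ↑(s.biUnion r) with hA
    set F : Set N := ↑(s.image Subtype.val) with hF
    have hAsub : A ⊆ B₁ \ B₂ := by
      intro x hx
      simp only [hA, Finset.coe_biUnion, mem_iUnion, Finset.mem_coe] at hx
      obtain ⟨f, _, hf⟩ := hx
      exact ((hrmem f x).mp hf).1
    have hFsub : F ⊆ B₂ \ B₁ := by
      intro x hx
      simp only [hF, Finset.coe_image, Finset.mem_coe, mem_image] at hx
      obtain ⟨f, _, rfl⟩ := hx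
      exact f.2
    -- every f in s lies in the closure of (B₁ ∩ B₂) ∪ A
    have hclos : ∀ f ∈ s, (↑f : N) ∈ M.closure ((B₁ ∩ B₂) ∪ A) := by
      intro f hfs
      have hfE : (↑f : N) ∈ M.E := hB₂.subset_ground f.2.1
      have hfB : (↑f : N) ∈ M.closure B₁ := by rw [hB₁.closure_eq]; exact hfE
      have hstep : ∀ e ∈ (B₁ \ B₂) \ A, (↑f : N) ∈ M.closure (B₁ \ {e}) := by
        intro e he
        by_contra hnot
        have hind : M.Indep (insert (↑f : N) (B₁ \ {e})) := by
          rw [(hB₁.indep.diff {e}).insert_indep_iff_of_notMem (fun h => f.2.2 h.1)]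
          exact ⟨hfE, hnot⟩
        have : e ∈ A := by
          simp only [hA, Finset.mem_coe, Finset.mem_biUnion]
          exact ⟨f, hfs, (hrmem f e).mpr ⟨he.1, hind⟩⟩
        exact he.2 this
      have := aux_closure_diff hB₁.indep
        ((hB1fin.diff (t := B₂)).subset diff_subset) ((diff_subset).trans diff_subset) hfB hstep
      have heq : B₁ \ ((B₁ \ B₂) \ A) = (B₁ ∩ B₂) ∪ A := by
        ext x
        constructor
        · rintro ⟨hx1, hx2⟩
          by_cases hx3 : x ∈ B₂
          · exact Or.inl ⟨hx1, hx3⟩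
          · exact Or.inr (by_contra fun hxa => hx2 ⟨⟨hx1, hx3⟩, hxa⟩)
        · rintro (⟨hx1, hx2⟩ | hx)
          · exact ⟨hx1, fun h => h.1.2 hx2⟩
          · exact ⟨(hAsub hx).1, fun h => h.2 hx⟩
      rwa [heq] at this
    -- cardinality comparison via the two independent sets
    have hIind : M.Indep ((B₁ ∩ B₂) ∪ A) :=
      hB₁.indep.subset (union_subset inter_subset_left (hAsub.trans diff_subset))
    have hJind : M.Indep ((B₁ ∩ B₂) ∪ F) :=
      hB₂.indep.subset (union_subset inter_subset_right (hFsub.trans diff_subset))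
    have hJcl : (B₁ ∩ B₂) ∪ F ⊆ M.closure ((B₁ ∩ B₂) ∪ A) := by
      apply union_subset
      · exact subset_union_left.trans (M.subset_closure _ (hIind.subset_ground))
      · intro x hx
        simp only [hF, Finset.coe_image, Finset.mem_coe, mem_image] at hx
        obtain ⟨f, hfs, rfl⟩ := hx
        exact hclos f hfs
    have hcard := aux_encard_le hIind hJind hJcl
    have hdisjA : Disjoint (B₁ ∩ B₂) A :=
      disjoint_left.mpr (fun x hx hxa => (hAsub hxa).2 hx.2)
    have hdisjF : Disjoint (B₁ ∩ B₂) F :=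
      disjoint_left.mpr (fun x hx hxf => (hFsub hxf).2 hx.1)
    rw [encard_union_eq hdisjF, encard_union_eq hdisjA] at hcard
    have hfin : (B₁ ∩ B₂).encard ≠ ⊤ := by
      rw [encard_ne_top_iff]; exact hB1fin.subset inter_subset_left
    have hFA : F.encard ≤ A.encard := by
      rwa [ENat.add_le_add_iff_left hfin] at hcard
    have hFcard : F.encard = (s.card : ℕ∞) := by
      rw [hF, encard_coe_eq_coe_finsetCard,
        Finset.card_image_of_injective _ Subtype.val_injective]
    have hAcard : A.encard = ((s.biUnion r).card : ℕ∞) := by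
      rw [hA, encard_coe_eq_coe_finsetCard]
    rw [hFcard, hAcard, Nat.cast_le] at hFA
    exact hFA
  -- apply Hall's theorem
  obtain ⟨g, hginj, hgmem⟩ := (Finset.all_card_le_biUnion_card_iff_exists_injective r).mp hall
  -- g maps B₂ \ B₁ injectively into B₁ \ B₂ with the exchange property
  have hg1 : ∀ f : ↥(B₂ \ B₁), g f ∈ B₁ \ B₂ := fun f => ((hrmem f (g f)).mp (hgmem f)).1
  have hg2 : ∀ f : ↥(B₂ \ B₁), M.Indep (insert (↑f : N) (B₁ \ {g f})) :=
    fun f => ((hrmem f (g f)).mp (hgmem f)).2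
  set g' : ↥(B₂ \ B₁) → ↥(B₁ \ B₂) := fun f => ⟨g f, hg1 f⟩ with hg'
  have hg'inj : Function.Injective g' := by
    intro a b hab
    exact hginj (congrArg Subtype.val hab)
  haveI : Finite ↥(B₁ \ B₂) := (hB1fin.diff (t := B₂)).to_subtype
  haveI : Finite ↥(B₂ \ B₁) := (hB2fin.diff (t := B₁)).to_subtype
  have hcard12 : Nat.card ↥(B₂ \ B₁) = Nat.card ↥(B₁ \ B₂) := by
    rw [Nat.card_coe_set_eq, Nat.card_coe_set_eq, hB₂.ncard_diff_comm hB₁]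
  have hg'bij : Function.Bijective g' :=
    (Nat.bijective_iff_injective_and_card g').mpr ⟨hg'inj, hcard12⟩
  set ψ : ↥(B₁ \ B₂) → ↥(B₂ \ B₁) := fun e => (Equiv.ofBijective g' hg'bij).symm e with hψ
  have hψg : ∀ e : ↥(B₁ \ B₂), g' (ψ e) = e := fun e =>
    (Equiv.ofBijective g' hg'bij).apply_symm_apply e
  have hψinj : Function.Injective ψ := (Equiv.ofBijective g' hg'bij).symm.injective
  -- define π
  set π : ↥B₁ → ↥B₂ := fun e =>
    if h : (↑e : N) ∈ B₂ then ⟨↑e, h⟩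
    else ⟨↑(ψ ⟨↑e, ⟨e.2, h⟩⟩), (ψ ⟨↑e, ⟨e.2, h⟩⟩).2.1⟩ with hπ
  have hva : ∀ (e : ↥B₁) (h : (↑e : N) ∈ B₂), (↑(π e) : N) = ↑e := by
    intro e h; simp [hπ, h]
  have hvb : ∀ (e : ↥B₁) (h : (↑e : N) ∉ B₂),
      (↑(π e) : N) = ↑(ψ ⟨↑e, ⟨e.2, h⟩⟩) := by
    intro e h; simp [hπ, h]
  have hπinj : Function.Injective π := by
    intro a b hab
    have hv : (↑(π a) : N) = ↑(π b) := congrArg Subtype.val hab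
    by_cases ha : (↑a : N) ∈ B₂ <;> by_cases hb : (↑b : N) ∈ B₂
    · rw [hva a ha, hva b hb] at hv
      exact Subtype.ext hv
    · rw [hva a ha, hvb b hb] at hv
      exact absurd a.2 (hv ▸ (ψ ⟨↑b, ⟨b.2, hb⟩⟩).2.2)
    · rw [hvb a ha, hva b hb] at hv
      exact absurd b.2 (hv ▸ (ψ ⟨↑a, ⟨a.2, ha⟩⟩).2.2)
    · rw [hvb a ha, hvb b hb] at hv
      have h2 := hψinj (Subtype.ext hv)
      exact Subtype.ext (congrArg (fun x : ↥(B₁ \ B₂) => (x : N)) h2)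
  haveI : Finite ↥B₁ := hB1fin.to_subtype
  haveI : Finite ↥B₂ := hB2fin.to_subtype
  have hcardB : Nat.card ↥B₁ = Nat.card ↥B₂ := by
    rw [Nat.card_coe_set_eq, Nat.card_coe_set_eq, hB₁.ncard_eq_ncard_of_isBase hB₂]
  have hπbij : Function.Bijective π :=
    (Nat.bijective_iff_injective_and_card π).mpr ⟨hπinj, hcardB⟩
  refine ⟨π, hπbij, ?_⟩
  intro e
  rw [union_singleton]
  by_cases h : (↑e : N) ∈ B₂
  · have : π e = ⟨↑e, h⟩ := by simp [hπ, h]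
    rw [this]
    simp only
    rw [insert_diff_singleton, insert_eq_of_mem e.2]
    exact hB₁.indep
  · have hpe : (↑(π e) : N) = ↑(ψ ⟨↑e, ⟨e.2, h⟩⟩) := by simp [hπ, h]
    rw [hpe]
    have hge : g (ψ ⟨↑e, ⟨e.2, h⟩⟩) = ↑e := congrArg Subtype.val (hψg ⟨↑e, ⟨e.2, h⟩⟩)
    have := hg2 (ψ ⟨↑e, ⟨e.2, h⟩⟩)
    rwa [hge] at this
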